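/- Event-triggered positive invariance with state-error threshold (Corollary 3): consider the closed-loop system x_{t+1} = (A + BK) x_t + BK e_t + E w_t, where the event-trigger guarantees ‖e_t‖ ≤ σ₃ for all t. Assume the spectral norm ‖A + BK‖ < 1, Σ_w is positive semidefinite, and suppose r² > (1/(1 − ‖A+BK‖)²)·(1/ε)·Tr(Σ_w Eᵀ E) and 0 ≤ σ₃ ≤ (1/‖BK‖)·( (1 − ‖A+BK‖)·r − √((1/ε)·Tr(Σ_w Eᵀ E)) ). Then the ball D = {x : ‖x‖² ≤ r²} is worst-case CVaR positively invariant: for every x with ‖x‖² ≤ r², every k ≥ 1, and every error sequence with ‖e_τ‖ ≤ σ₃: sup_{P ∈ M_k} CVaR_ε^P[ ‖(A+BK)^k x + Σ_{j=0}^{k−1} (A+BK)^j (BK e_{k−1−j} + E w_{k−1−j})‖² − r² ] ≤ 0. -/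

import Mathlib

open MeasureTheory Matrix Kronecker

/-- Spectral norm (largest singular value) of a real matrix, as the operator norm of the
induced map between Euclidean spaces. -/
noncomputable def specNorm {m n : Type*} [Fintype m] [Fintype n] [DecidableEq n]
    (A : Matrix m n ℝ) : ℝ :=
  ‖LinearMap.toContinuousLinearMap (Matrix.toEuclideanLin A)‖

/-- Conditional value-at-risk at level `ε` of the loss `L` under the measure `P`:
`CVaR_ε^P[L] = inf_β ( β + (1/ε) E_P[max (L ξ - β) 0] )`. -/
noncomputable def CVaR {ι : Type*} [Fintype ι] (ε : ℝ)
    (P : Measure (EuclideanSpace ℝ ι)) (L : EuclideanSpace ℝ ι → ℝ) : ℝ :=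
  ⨅ β : ℝ, (β + ε⁻¹ * ∫ ξ, max (L ξ - β) 0 ∂P)

/-- The set `M(S)` of Borel probability measures with zero mean and covariance `S`. -/
def MomentSet {ι : Type*} [Fintype ι] (S : Matrix ι ι ℝ) :
    Set (Measure (EuclideanSpace ℝ ι)) :=
  {P | IsProbabilityMeasure P ∧
       (∀ i, Integrable (fun ξ => ξ i) P) ∧
       (∀ i, ∫ ξ, ξ i ∂P = 0) ∧
       (∀ i j, Integrable (fun ξ => ξ i * ξ j) P) ∧
       (∀ i j, ∫ ξ, ξ i * ξ j ∂P = S i j)}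

/-- Worst-case CVaR over the moment set `M(S)`. -/
noncomputable def wcCVaR {ι : Type*} [Fintype ι] (ε : ℝ) (S : Matrix ι ι ℝ)
    (L : EuclideanSpace ℝ ι → ℝ) : ℝ :=
  ⨆ P : MomentSet S, CVaR ε (P : Measure (EuclideanSpace ℝ ι)) L

/-- The block matrix `H_t = [A^(t-1) E, A^(t-2) E, ..., E]`, viewed as a matrix acting on the
stacked disturbance vector `w̄_t = (w_0, ..., w_(t-1))` (indexed by `Fin t × Fin nw`),
so that `H_t w̄_t = Σ_k A^(t-1-k) E w_k`. -/
noncomputable def Hmat {nx nw : ℕ} (A : Matrix (Fin nx) (Fin nx) ℝ)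
    (E : Matrix (Fin nx) (Fin nw) ℝ) (t : ℕ) :
    Matrix (Fin nx) (Fin t × Fin nw) ℝ :=
  Matrix.of fun i p => (A ^ (t - 1 - (p.1 : ℕ)) * E) i p.2

section AuxSpec

set_option linter.unusedSectionVars false

variable {l m n : Type*} [Fintype l] [Fintype m] [Fintype n]
  [DecidableEq l] [DecidableEq m] [DecidableEq n]

lemma specNorm_nonneg (A : Matrix m n ℝ) : 0 ≤ specNorm A := norm_nonneg _

lemma norm_toEuclideanLin_apply_le (A : Matrix m n ℝ) (v : EuclideanSpace ℝ n) :
    ‖Matrix.toEuclideanLin A v‖ ≤ specNorm A * ‖v‖ := by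
  simpa [specNorm] using (LinearMap.toContinuousLinearMap (Matrix.toEuclideanLin A)).le_opNorm v

lemma toEuclideanLin_mul_apply (A : Matrix m n ℝ) (B : Matrix n l ℝ) (v : EuclideanSpace ℝ l) :
    Matrix.toEuclideanLin (A * B) v
      = Matrix.toEuclideanLin A (Matrix.toEuclideanLin B v) := by
  simp [Matrix.toEuclideanLin_apply, Matrix.mulVec_mulVec]

lemma specNorm_mul_le (A : Matrix m n ℝ) (B : Matrix n l ℝ) :
    specNorm (A * B) ≤ specNorm A * specNorm B := by
  refine ContinuousLinearMap.opNorm_le_bound _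
    (mul_nonneg (specNorm_nonneg A) (specNorm_nonneg B)) fun v => ?_
  have h1 : (LinearMap.toContinuousLinearMap (Matrix.toEuclideanLin (A * B))) v
      = Matrix.toEuclideanLin A (Matrix.toEuclideanLin B v) := by
    simp [toEuclideanLin_mul_apply]
  rw [h1, mul_assoc]
  refine (norm_toEuclideanLin_apply_le A _).trans ?_
  exact mul_le_mul_of_nonneg_left (norm_toEuclideanLin_apply_le B v) (specNorm_nonneg A)

lemma specNorm_one_le : specNorm (1 : Matrix n n ℝ) ≤ 1 := by
  refine ContinuousLinearMap.opNorm_le_bound _ zero_le_one fun v => ?_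
  have h1 : (LinearMap.toContinuousLinearMap
      (Matrix.toEuclideanLin (1 : Matrix n n ℝ))) v = v := by
    simp [Matrix.toEuclideanLin_apply, Matrix.one_mulVec]
  rw [h1, one_mul]

lemma specNorm_pow_le (A : Matrix n n ℝ) : ∀ j : ℕ, specNorm (A ^ j) ≤ specNorm A ^ j
  | 0 => by simpa using specNorm_one_le
  | (j+1) => by
      rw [pow_succ, pow_succ]
      refine (specNorm_mul_le _ _).trans ?_
      exact mul_le_mul_of_nonneg_right (specNorm_pow_le A j) (specNorm_nonneg A)

lemma euclid_sum_apply {ι γ : Type*} [Fintype ι] (s : Finset γ)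
    (f : γ → EuclideanSpace ℝ ι) (i : ι) :
    (∑ j ∈ s, f j) i = ∑ j ∈ s, f j i := by
  classical
  induction s using Finset.induction with
  | empty => rfl
  | insert _ _ h ih => rw [Finset.sum_insert h, Finset.sum_insert h, ← ih]; rfl

lemma euclid_apply_coord {m' n' : Type*} [Fintype m'] [Fintype n'] [DecidableEq n']
    (M : Matrix m' n' ℝ) (v : EuclideanSpace ℝ n') (i : m') :
    (Matrix.toEuclideanLin M v) i = ∑ p, M i p * v p := rfl

lemma euclid_norm_sq {ι : Type*} [Fintype ι] (v : EuclideanSpace ℝ ι) :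
    ‖v‖ ^ 2 = ∑ i, (v i) ^ 2 := by
  rw [EuclideanSpace.norm_eq, Real.sq_sqrt (by positivity)]
  simp [sq_abs]

lemma aux_quad (abar st a C r2 : ℝ) (ha : 0 < a) (hst0 : 0 ≤ st)
    (hkey : a * C = abar ^ 2) :
    (abar + st) ^ 2 - r2 - (abar ^ 2 - r2 + C) ≤ (1 + a) * st ^ 2 := by
  nlinarith [sq_nonneg (a * st - abar), mul_pos ha ha]

lemma aux_final (abar u δ δ' R : ℝ) (habar0 : 0 ≤ abar) (hu0 : 0 ≤ u) (hδ0 : 0 < δ)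
    (hau : abar + u ≤ R) (hδR : δ * (R + 1) = δ') :
    abar ^ 2 - R ^ 2 + abar ^ 2 * (u + δ) / (abar + δ)
      + (1 + (abar + δ) / (u + δ)) * u ^ 2 ≤ 0 + δ' := by
  have e1 : abar ^ 2 * (u + δ) / (abar + δ) ≤ abar * (u + δ) := by
    rw [div_le_iff₀ (by linarith : (0:ℝ) < abar + δ)]
    nlinarith [mul_nonneg (mul_nonneg habar0 (by linarith : (0:ℝ) ≤ u + δ)) hδ0.le]
  have e2 : (abar + δ) / (u + δ) * u ^ 2 ≤ (abar + δ) * u := by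
    rw [div_mul_eq_mul_div, div_le_iff₀ (by linarith : (0:ℝ) < u + δ)]
    nlinarith [mul_nonneg (mul_nonneg (by linarith : (0:ℝ) ≤ abar + δ) hu0) hδ0.le]
  have hsq : (abar + u) ^ 2 ≤ R ^ 2 := by nlinarith
  nlinarith [mul_le_mul_of_nonneg_left hau hδ0.le]

end AuxSpec

section AuxInt

variable {ι : Type*} [Fintype ι] (P : Measure (EuclideanSpace ℝ ι))

lemma aux_integrable_linear (hint1 : ∀ i, Integrable (fun ξ => ξ i) P) (v : ι → ℝ) :
    Integrable (fun ξ => ∑ q, v q * ξ q) P :=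
  integrable_finset_sum _ fun q _ => (hint1 q).const_mul _

lemma aux_sq_sum_expand (v : ι → ℝ) (ξ : EuclideanSpace ℝ ι) :
    (∑ q, v q * ξ q) ^ 2 = ∑ q, ∑ q', (v q * v q') * (ξ q * ξ q') := by
  rw [sq, Finset.sum_mul_sum]
  exact Finset.sum_congr rfl fun q _ => Finset.sum_congr rfl fun q' _ => by ring

lemma aux_integrable_sq_linear (hint2 : ∀ i j, Integrable (fun ξ => ξ i * ξ j) P)
    (v : ι → ℝ) : Integrable (fun ξ => (∑ q, v q * ξ q) ^ 2) P := by
  simp only [aux_sq_sum_expand]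
  exact integrable_finset_sum _ fun q _ =>
    integrable_finset_sum _ fun q' _ => (hint2 q q').const_mul _

lemma aux_integral_sq_linear (S : Matrix ι ι ℝ)
    (hint2 : ∀ i j, Integrable (fun ξ => ξ i * ξ j) P)
    (hcov : ∀ i j, ∫ ξ, ξ i * ξ j ∂P = S i j) (v : ι → ℝ) :
    ∫ ξ, (∑ q, v q * ξ q) ^ 2 ∂P = ∑ q, ∑ q', (v q * v q') * S q q' := by
  simp only [aux_sq_sum_expand]
  rw [integral_finset_sum _ (fun q _ =>
    integrable_finset_sum _ fun q' _ => (hint2 q q').const_mul _)]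
  refine Finset.sum_congr rfl fun q _ => ?_
  rw [integral_finset_sum _ (fun q' _ => (hint2 q q').const_mul _)]
  refine Finset.sum_congr rfl fun q' _ => ?_
  rw [integral_const_mul, hcov]

lemma aux_integrable_affine_sq [IsProbabilityMeasure P]
    (hint1 : ∀ i, Integrable (fun ξ => ξ i) P)
    (hint2 : ∀ i j, Integrable (fun ξ => ξ i * ξ j) P) (a : ℝ) (v : ι → ℝ) :
    Integrable (fun ξ => (a + ∑ q, v q * ξ q) ^ 2) P := by
  have h : (fun ξ : EuclideanSpace ℝ ι => (a + ∑ q, v q * ξ q) ^ 2)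
      = fun ξ => (a ^ 2 + (2 * a) * (∑ q, v q * ξ q)) + (∑ q, v q * ξ q) ^ 2 := by
    funext ξ; ring
  rw [h]
  exact ((integrable_const _).add
    ((aux_integrable_linear P hint1 v).const_mul _)).add
    (aux_integrable_sq_linear P hint2 v)

end AuxInt

set_option maxHeartbeats 2000000 in
/-- Corollary 3: event-triggered positive invariance with a state-error
threshold, for the closed loop `x_{t+1} = (A+BK) x_t + BK e_t + E w_t` with `‖e_t‖ ≤ σ₃`. -/
theorem stmt19 {nx nu nw : ℕ} (ε : ℝ) (hε : ε ∈ Set.Ioo (0 : ℝ) 1)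
    (A : Matrix (Fin nx) (Fin nx) ℝ) (B : Matrix (Fin nx) (Fin nu) ℝ)
    (K : Matrix (Fin nu) (Fin nx) ℝ) (E : Matrix (Fin nx) (Fin nw) ℝ)
    (Sw : Matrix (Fin nw) (Fin nw) ℝ)
    (hA : specNorm (A + B * K) < 1) (hSw : Sw.PosSemidef)
    (r σ₃ : ℝ)
    (hr2 : ((1 - specNorm (A + B * K)) ^ 2)⁻¹ *
      (ε⁻¹ * Matrix.trace (Sw * Eᵀ * E)) < r ^ 2)
    (hσ₃0 : 0 ≤ σ₃)
    (hσ₃ : σ₃ ≤ (specNorm (B * K))⁻¹ *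
      ((1 - specNorm (A + B * K)) * r -
        Real.sqrt (ε⁻¹ * Matrix.trace (Sw * Eᵀ * E)))) :
    ∀ x : EuclideanSpace ℝ (Fin nx), ‖x‖ ^ 2 ≤ r ^ 2 → ∀ k : ℕ, 1 ≤ k →
      ∀ e : ℕ → EuclideanSpace ℝ (Fin nx), (∀ τ, ‖e τ‖ ≤ σ₃) →
      wcCVaR ε ((1 : Matrix (Fin k) (Fin k) ℝ) ⊗ₖ Sw)
        (fun w => ‖Matrix.toEuclideanLin ((A + B * K) ^ k) x +
          (∑ j ∈ Finset.range k,
            Matrix.toEuclideanLin ((A + B * K) ^ j * (B * K)) (e (k - 1 - j))) +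
          Matrix.toEuclideanLin (Hmat (A + B * K) E k) w‖ ^ 2 - r ^ 2) ≤ 0 := by
  obtain ⟨hε0, hε1⟩ := hε
  intro x hx k hk e he
  classical
  set Ac := A + B * K with hAcdef
  set ρ := specNorm Ac with hρdef
  have hρ0 : 0 ≤ ρ := specNorm_nonneg _
  have hρ1 : ρ < 1 := hA
  set tr := Matrix.trace (Sw * Eᵀ * E) with htrdef
  have htr_eq : tr = ∑ i, ∑ p, ∑ q, E i p * E i q * Sw p q := by
    rw [htrdef]
    simp only [Matrix.trace, Matrix.diag, Matrix.mul_apply, Matrix.transpose_apply,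
      Finset.sum_mul]
    rw [Finset.sum_comm]
    refine Finset.sum_congr rfl fun i _ => ?_
    refine Finset.sum_congr rfl fun p _ => Finset.sum_congr rfl fun q _ => by ring
  have htr0 : 0 ≤ tr := by
    rw [htr_eq]
    refine Finset.sum_nonneg fun i _ => ?_
    have h := hSw.dotProduct_mulVec_nonneg (fun p => E i p)
    have heq : (star fun p => E i p) ⬝ᵥ Sw *ᵥ (fun p => E i p)
        = ∑ p, ∑ q, E i p * E i q * Sw p q := by
      simp only [star_trivial, dotProduct, Matrix.mulVec, Finset.mul_sum]
      exact Finset.sum_congr rfl fun p _ => Finset.sum_congr rfl fun q _ => by ring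
    rw [heq] at h
    exact h
  have hεi : (0:ℝ) < ε⁻¹ := inv_pos.mpr hε0
  set s := Real.sqrt (ε⁻¹ * tr) with hsdef
  have hs0 : 0 ≤ s := Real.sqrt_nonneg _
  have hs2 : s ^ 2 = ε⁻¹ * tr := Real.sq_sqrt (by positivity)
  set R := |r| with hRdef
  have hR0 : 0 ≤ R := abs_nonneg r
  have hrR : r ≤ R := le_abs_self r
  have hr2R : r ^ 2 = R ^ 2 := (sq_abs r).symm
  have h1ρ : 0 < 1 - ρ := by linarith only [hρ1]
  have hsR : s ≤ (1 - ρ) * R := by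
    have hpos : (0:ℝ) < (1 - ρ) ^ 2 := by positivity
    have h2 : ε⁻¹ * tr < (1 - ρ) ^ 2 * r ^ 2 := by
      have h3 := (inv_mul_lt_iff₀ hpos).mp hr2
      linarith only [h3]
    have h2b : ((1 - ρ) * R) ^ 2 = (1 - ρ) ^ 2 * r ^ 2 := by rw [hr2R]; ring
    have h4 : ε⁻¹ * tr ≤ ((1 - ρ) * R) ^ 2 := by linarith only [h2, h2b]
    calc s ≤ Real.sqrt (((1 - ρ) * R) ^ 2) := Real.sqrt_le_sqrt h4
      _ = (1 - ρ) * R := Real.sqrt_sq (by positivity)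
  have hcs : specNorm (B * K) * σ₃ + s ≤ (1 - ρ) * R := by
    rcases eq_or_lt_of_le (specNorm_nonneg (B * K)) with hBK | hBK
    · rw [← hBK]; simpa using hsR
    · have h3 : specNorm (B * K) * σ₃ ≤ (1 - ρ) * r - s :=
        (le_inv_mul_iff₀ hBK).mp hσ₃
      have h5 : (1 - ρ) * r ≤ (1 - ρ) * R := mul_le_mul_of_nonneg_left hrR h1ρ.le
      linarith only [h3, h5]
  set G := ∑ j ∈ Finset.range k, ρ ^ j with hGdef
  have hG0 : 0 ≤ G := Finset.sum_nonneg fun j _ => pow_nonneg hρ0 j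
  have hGgeom : G * (1 - ρ) = 1 - ρ ^ k := by
    have h := geom_sum_mul ρ k
    rw [hGdef]; linear_combination -h
  have hρk0 : 0 ≤ ρ ^ k := pow_nonneg hρ0 k
  set c := Matrix.toEuclideanLin (Ac ^ k) x +
      (∑ j ∈ Finset.range k,
        Matrix.toEuclideanLin (Ac ^ j * (B * K)) (e (k - 1 - j))) with hcdef
  set abar := ρ ^ k * R + specNorm (B * K) * σ₃ * G with habardef
  have habar0 : 0 ≤ abar :=
    add_nonneg (mul_nonneg hρk0 hR0)
      (mul_nonneg (mul_nonneg (specNorm_nonneg _) hσ₃0) hG0)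
  have hxR : ‖x‖ ≤ R := by
    calc ‖x‖ = Real.sqrt (‖x‖ ^ 2) := (Real.sqrt_sq (norm_nonneg x)).symm
      _ ≤ Real.sqrt (R ^ 2) := Real.sqrt_le_sqrt (by rw [← hr2R]; exact hx)
      _ = R := Real.sqrt_sq hR0
  have hcbound : ‖c‖ ≤ abar := by
    rw [hcdef, habardef]
    refine (norm_add_le _ _).trans ?_
    have h1 : ‖Matrix.toEuclideanLin (Ac ^ k) x‖ ≤ ρ ^ k * R := by
      refine (norm_toEuclideanLin_apply_le _ _).trans ?_
      exact mul_le_mul (specNorm_pow_le Ac k) hxR (norm_nonneg x) hρk0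
    have h2 : ‖∑ j ∈ Finset.range k,
        Matrix.toEuclideanLin (Ac ^ j * (B * K)) (e (k - 1 - j))‖
        ≤ specNorm (B * K) * σ₃ * G := by
      refine (norm_sum_le _ _).trans ?_
      have hterm : ∀ j ∈ Finset.range k,
          ‖Matrix.toEuclideanLin (Ac ^ j * (B * K)) (e (k - 1 - j))‖
            ≤ (specNorm (B * K) * σ₃) * ρ ^ j := by
        intro j _
        refine (norm_toEuclideanLin_apply_le _ _).trans ?_
        calc specNorm (Ac ^ j * (B * K)) * ‖e (k - 1 - j)‖
            ≤ (specNorm (Ac ^ j) * specNorm (B * K)) * σ₃ :=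
              mul_le_mul (specNorm_mul_le _ _) (he _) (norm_nonneg _)
                (mul_nonneg (specNorm_nonneg _) (specNorm_nonneg _))
          _ ≤ (ρ ^ j * specNorm (B * K)) * σ₃ :=
              mul_le_mul_of_nonneg_right
                (mul_le_mul_of_nonneg_right (specNorm_pow_le Ac j)
                  (specNorm_nonneg _)) hσ₃0
          _ = (specNorm (B * K) * σ₃) * ρ ^ j := by ring
      refine (Finset.sum_le_sum hterm).trans ?_
      rw [← Finset.mul_sum, ← hGdef]
    linarith only [h1, h2, norm_add_le (Matrix.toEuclideanLin (Ac ^ k) x)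
      (∑ j ∈ Finset.range k, Matrix.toEuclideanLin (Ac ^ j * (B * K)) (e (k - 1 - j)))]
  set u := G * s with hudef
  have hu0 : 0 ≤ u := mul_nonneg hG0 hs0
  have hau : abar + u ≤ R := by
    have h4 : G * (specNorm (B * K) * σ₃ + s) ≤ G * ((1 - ρ) * R) :=
      mul_le_mul_of_nonneg_left hcs hG0
    have h5 : G * ((1 - ρ) * R) = (1 - ρ ^ k) * R := by
      rw [← hGgeom]; ring
    have h6 : abar + u = ρ ^ k * R + G * (specNorm (B * K) * σ₃ + s) := by
      rw [habardef, hudef]; ring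
    have h7 : ρ ^ k * R + (1 - ρ ^ k) * R = R := by ring
    linarith only [h4, h5, h6, h7]
  -- pass to individual measures
  refine Real.iSup_le (fun Psub => ?_) le_rfl
  obtain ⟨P, hprob, hint1, hmean, hint2, hcov⟩ := Psub
  haveI : IsProbabilityMeasure P := hprob
  refine le_of_forall_pos_le_add fun δ' hδ' => ?_
  set δ := δ' / (R + 1) with hδdef
  have hδ0 : 0 < δ := div_pos hδ' (by linarith only [hR0])
  set lam := 1 + (abar + δ) / (u + δ) with hlamdef
  have ha_pos : 0 < (abar + δ) / (u + δ) :=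
    div_pos (by linarith only [habar0, hδ0]) (by linarith only [hu0, hδ0])
  have hlam1 : 1 < lam := by rw [hlamdef]; linarith only [ha_pos]
  set β := abar ^ 2 - r ^ 2 + abar ^ 2 * (u + δ) / (abar + δ) with hβdef
  -- the per-block disturbance norms
  set tE : Fin k → EuclideanSpace ℝ (Fin k × Fin nw) → ℝ := fun j ξ =>
    ‖Matrix.toEuclideanLin E ((EuclideanSpace.equiv (Fin nw) ℝ).symm fun p => ξ (j, p))‖
    with htEdef
  set Q : EuclideanSpace ℝ (Fin k × Fin nw) → ℝ := fun ξ =>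
    ∑ j : Fin k, ρ ^ (k - 1 - (j : ℕ)) * (tE j ξ) ^ 2 with hQdef
  -- pointwise domination
  have hpt : ∀ ξ, max ((‖c + Matrix.toEuclideanLin (Hmat Ac E k) ξ‖ ^ 2 - r ^ 2) - β) 0
      ≤ lam * (G * Q ξ) := by
    intro ξ
    have hst0 : (0:ℝ) ≤ ‖Matrix.toEuclideanLin (Hmat Ac E k) ξ‖ := norm_nonneg _
    set st := ‖Matrix.toEuclideanLin (Hmat Ac E k) ξ‖ with hstdef
    have htE0 : ∀ j : Fin k, 0 ≤ tE j ξ := fun j => by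
      simp only [htEdef]; exact norm_nonneg _
    have hsub : Matrix.toEuclideanLin (Hmat Ac E k) ξ
        = ∑ j : Fin k, Matrix.toEuclideanLin (Ac ^ (k - 1 - (j : ℕ)) * E)
            ((EuclideanSpace.equiv (Fin nw) ℝ).symm fun p => ξ (j, p)) := by
      apply PiLp.ext
      intro i
      rw [euclid_sum_apply, euclid_apply_coord, Fintype.sum_prod_type]
      refine Finset.sum_congr rfl fun j _ => ?_
      rw [euclid_apply_coord]
      exact Finset.sum_congr rfl fun p _ => rfl
    have hstle : st ≤ ∑ j : Fin k, ρ ^ (k - 1 - (j : ℕ)) * tE j ξ := by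
      rw [hstdef, hsub]
      refine (norm_sum_le _ _).trans (Finset.sum_le_sum fun j _ => ?_)
      rw [toEuclideanLin_mul_apply]
      refine (norm_toEuclideanLin_apply_le _ _).trans ?_
      have htEeq : tE j ξ = ‖Matrix.toEuclideanLin E
          ((EuclideanSpace.equiv (Fin nw) ℝ).symm fun p => ξ (j, p))‖ := by
        simp only [htEdef]
      rw [htEeq]
      exact mul_le_mul_of_nonneg_right (specNorm_pow_le Ac _) (norm_nonneg _)
    have hsum : (∑ j : Fin k, ρ ^ (k - 1 - (j : ℕ))) = G := by
      rw [hGdef, Fin.sum_univ_eq_sum_range (fun j => ρ ^ (k - 1 - j)) k]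
      exact Finset.sum_range_reflect (fun j => ρ ^ j) k
    have hst2 : st ^ 2 ≤ G * Q ξ := by
      have hCS := Finset.sum_mul_sq_le_sq_mul_sq Finset.univ
        (fun j : Fin k => Real.sqrt (ρ ^ (k - 1 - (j : ℕ))))
        (fun j : Fin k => Real.sqrt (ρ ^ (k - 1 - (j : ℕ))) * tE j ξ)
      have h1 : (∑ j : Fin k, Real.sqrt (ρ ^ (k - 1 - (j : ℕ))) *
          (Real.sqrt (ρ ^ (k - 1 - (j : ℕ))) * tE j ξ))
          = ∑ j : Fin k, ρ ^ (k - 1 - (j : ℕ)) * tE j ξ :=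
        Finset.sum_congr rfl fun j _ => by
          rw [← mul_assoc, Real.mul_self_sqrt (pow_nonneg hρ0 _)]
      have h2 : (∑ j : Fin k, (Real.sqrt (ρ ^ (k - 1 - (j : ℕ)))) ^ 2)
          = ∑ j : Fin k, ρ ^ (k - 1 - (j : ℕ)) :=
        Finset.sum_congr rfl fun j _ => Real.sq_sqrt (pow_nonneg hρ0 _)
      have h3 : (∑ j : Fin k, (Real.sqrt (ρ ^ (k - 1 - (j : ℕ))) * tE j ξ) ^ 2)
          = ∑ j : Fin k, ρ ^ (k - 1 - (j : ℕ)) * (tE j ξ) ^ 2 :=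
        Finset.sum_congr rfl fun j _ => by
          rw [mul_pow, Real.sq_sqrt (pow_nonneg hρ0 _)]
      rw [h1, h2, h3, hsum] at hCS
      have hsum0 : 0 ≤ ∑ j : Fin k, ρ ^ (k - 1 - (j : ℕ)) * tE j ξ :=
        Finset.sum_nonneg fun j _ => mul_nonneg (pow_nonneg hρ0 _) (htE0 j)
      have hstsq : st ^ 2 ≤ (∑ j : Fin k, ρ ^ (k - 1 - (j : ℕ)) * tE j ξ) ^ 2 :=
        pow_le_pow_left₀ hst0 hstle 2
      refine hstsq.trans (hCS.trans (le_of_eq ?_))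
      simp only [hQdef]
    -- quadratic majorization
    have hnorm_le : ‖c + Matrix.toEuclideanLin (Hmat Ac E k) ξ‖ ≤ abar + st := by
      refine (norm_add_le _ _).trans ?_
      rw [← hstdef]
      linarith only [hcbound]
    have hLle : ‖c + Matrix.toEuclideanLin (Hmat Ac E k) ξ‖ ^ 2 ≤ (abar + st) ^ 2 :=
      pow_le_pow_left₀ (norm_nonneg _) hnorm_le 2
    have hkey : ((abar + δ) / (u + δ)) * (abar ^ 2 * (u + δ) / (abar + δ)) = abar ^ 2 := by
      have hu' : u + δ ≠ 0 := ne_of_gt (by linarith only [hu0, hδ0])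
      have ha' : abar + δ ≠ 0 := ne_of_gt (by linarith only [habar0, hδ0])
      rw [div_mul_div_comm, div_eq_iff (mul_ne_zero hu' ha')]
      ring
    have hq : (abar + st) ^ 2 - r ^ 2 - β ≤ lam * st ^ 2 := by
      rw [hβdef, hlamdef]
      exact aux_quad abar st _ _ (r ^ 2) ha_pos hst0 hkey
    have hmax : max ((‖c + Matrix.toEuclideanLin (Hmat Ac E k) ξ‖ ^ 2 - r ^ 2) - β) 0
        ≤ lam * st ^ 2 :=
      max_le (by linarith only [hLle, hq])
        (mul_nonneg (by linarith only [hlam1]) (sq_nonneg st))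
    exact hmax.trans (mul_le_mul_of_nonneg_left hst2 (by linarith only [hlam1]))
  -- integrability of the loss part
  have hrwL : ∀ ξ : EuclideanSpace ℝ (Fin k × Fin nw),
      (‖c + Matrix.toEuclideanLin (Hmat Ac E k) ξ‖ ^ 2 - r ^ 2) - β
        = (∑ i, (c i + ∑ q, Hmat Ac E k i q * ξ q) ^ 2) - (r ^ 2 + β) := by
    intro ξ
    rw [euclid_norm_sq]
    have hco : ∀ i, (c + Matrix.toEuclideanLin (Hmat Ac E k) ξ) i
        = c i + ∑ q, Hmat Ac E k i q * ξ q := fun i => rfl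
    simp only [hco]
    ring
  have hLint : Integrable (fun ξ : EuclideanSpace ℝ (Fin k × Fin nw) =>
      max ((‖c + Matrix.toEuclideanLin (Hmat Ac E k) ξ‖ ^ 2 - r ^ 2) - β) 0) P := by
    have h1 : Integrable (fun ξ : EuclideanSpace ℝ (Fin k × Fin nw) =>
        (∑ i, (c i + ∑ q, Hmat Ac E k i q * ξ q) ^ 2) - (r ^ 2 + β)) P :=
      (integrable_finset_sum _ fun i _ =>
        aux_integrable_affine_sq P hint1 hint2 (c i) (fun q => Hmat Ac E k i q)).sub
        (integrable_const _)
    have h2 := h1.pos_part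
    have h3 : (fun ξ : EuclideanSpace ℝ (Fin k × Fin nw) =>
        max ((‖c + Matrix.toEuclideanLin (Hmat Ac E k) ξ‖ ^ 2 - r ^ 2) - β) 0)
        = fun ξ => max ((∑ i, (c i + ∑ q, Hmat Ac E k i q * ξ q) ^ 2) - (r ^ 2 + β)) 0 := by
      funext ξ; rw [hrwL]
    rw [h3]
    exact h2
  -- integrability and value of the quadratic majorant
  have htEsq : ∀ (j : Fin k) (ξ : EuclideanSpace ℝ (Fin k × Fin nw)),
      (tE j ξ) ^ 2 = ∑ i, (∑ p, E i p * ξ (j, p)) ^ 2 := by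
    intro j ξ
    simp only [htEdef]
    rw [euclid_norm_sq]
    exact Finset.sum_congr rfl fun i _ => rfl
  have hexp : ∀ (j : Fin k) (i : Fin nx) (ξ : EuclideanSpace ℝ (Fin k × Fin nw)),
      (∑ p, E i p * ξ (j, p)) ^ 2
        = ∑ p, ∑ p', (E i p * E i p') * (ξ (j, p) * ξ (j, p')) := by
    intro j i ξ
    rw [sq, Finset.sum_mul_sum]
    exact Finset.sum_congr rfl fun p _ => Finset.sum_congr rfl fun p' _ => by ring
  have htEfun : ∀ j : Fin k, (fun ξ : EuclideanSpace ℝ (Fin k × Fin nw) => (tE j ξ) ^ 2)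
      = fun ξ => ∑ i, ∑ p, ∑ p', (E i p * E i p') * (ξ (j, p) * ξ (j, p')) := by
    intro j
    funext ξ
    rw [htEsq j ξ]
    exact Finset.sum_congr rfl fun i _ => hexp j i ξ
  have htEint : ∀ j : Fin k, Integrable (fun ξ => (tE j ξ) ^ 2) P := by
    intro j
    rw [htEfun j]
    exact integrable_finset_sum _ fun i _ => integrable_finset_sum _ fun p _ =>
      integrable_finset_sum _ fun p' _ => (hint2 (j, p) (j, p')).const_mul _
  have htEval : ∀ j : Fin k, ∫ ξ, (tE j ξ) ^ 2 ∂P = tr := by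
    intro j
    rw [htEfun j]
    rw [integral_finset_sum _ (fun i _ => integrable_finset_sum _ fun p _ =>
      integrable_finset_sum _ fun p' _ => (hint2 (j, p) (j, p')).const_mul _)]
    have hstep : ∀ i : Fin nx,
        (∫ ξ, ∑ p, ∑ p', (E i p * E i p') * (ξ (j, p) * ξ (j, p')) ∂P)
          = ∑ p, ∑ p', E i p * E i p' * Sw p p' := by
      intro i
      rw [integral_finset_sum _ (fun p _ =>
        integrable_finset_sum _ fun p' _ => (hint2 (j, p) (j, p')).const_mul _)]
      refine Finset.sum_congr rfl fun p _ => ?_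
      rw [integral_finset_sum _ (fun p' _ => (hint2 (j, p) (j, p')).const_mul _)]
      refine Finset.sum_congr rfl fun p' _ => ?_
      rw [integral_const_mul, hcov (j, p) (j, p')]
      simp [Matrix.kroneckerMap_apply, Matrix.one_apply_eq]
    rw [Finset.sum_congr rfl fun i _ => hstep i, htr_eq]
  have hQint : Integrable Q P := by
    rw [hQdef]
    exact integrable_finset_sum _ fun j _ => (htEint j).const_mul _
  have hQval : ∫ ξ, Q ξ ∂P = G * tr := by
    rw [hQdef]
    rw [integral_finset_sum _ fun j _ => (htEint j).const_mul _]
    have hval : ∀ j : Fin k, (∫ ξ, ρ ^ (k - 1 - (j : ℕ)) * (tE j ξ) ^ 2 ∂P)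
        = ρ ^ (k - 1 - (j : ℕ)) * tr := fun j => by
      rw [integral_const_mul, htEval j]
    rw [Finset.sum_congr rfl fun j _ => hval j, ← Finset.sum_mul]
    congr 1
    rw [hGdef, Fin.sum_univ_eq_sum_range (fun j => ρ ^ (k - 1 - j)) k]
    exact Finset.sum_range_reflect (fun j => ρ ^ j) k
  -- bound the CVaR by the value at β
  by_cases hbdd : BddBelow (Set.range fun b : ℝ =>
    b + ε⁻¹ * ∫ ξ, max ((‖c + Matrix.toEuclideanLin (Hmat Ac E k) ξ‖ ^ 2 - r ^ 2) - b) 0 ∂P)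
  · refine le_trans (ciInf_le hbdd β) ?_
    show β + ε⁻¹ * ∫ ξ,
        max ((‖c + Matrix.toEuclideanLin (Hmat Ac E k) ξ‖ ^ 2 - r ^ 2) - β) 0 ∂P ≤ 0 + δ'
    have hintle : ∫ ξ,
        max ((‖c + Matrix.toEuclideanLin (Hmat Ac E k) ξ‖ ^ 2 - r ^ 2) - β) 0 ∂P
        ≤ lam * (G * (G * tr)) := by
      have h1 := integral_mono hLint ((hQint.const_mul G).const_mul lam) hpt
      have h2 : ∫ ξ, lam * (G * Q ξ) ∂P = lam * (G * (G * tr)) := by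
        have h3 : (fun ξ : EuclideanSpace ℝ (Fin k × Fin nw) => lam * (G * Q ξ))
            = fun ξ => (lam * G) * Q ξ := by funext ξ; ring
        rw [h3, integral_const_mul, hQval]; ring
      linarith only [h1, h2]
    have h6 : ε⁻¹ * (lam * (G * (G * tr))) = lam * u ^ 2 := by
      have h8 : u ^ 2 = G ^ 2 * (ε⁻¹ * tr) := by rw [hudef, mul_pow, hs2]
      rw [h8]; ring
    have hfinal : β + ε⁻¹ * (lam * (G * (G * tr))) ≤ 0 + δ' := by
      rw [h6, hβdef, hlamdef, hr2R]
      refine aux_final abar u δ δ' R habar0 hu0 hδ0 hau ?_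
      rw [hδdef, div_mul_cancel₀ δ' (by linarith only [hR0] : R + 1 ≠ 0)]
    have hmono := mul_le_mul_of_nonneg_left hintle hεi.le
    linarith only [hmono, hfinal]
  · exact le_trans (le_of_eq (Real.iInf_of_not_bddBelow hbdd))
      (by linarith only [hδ'])
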